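/- Let L ∈ ℝ^{n×n} satisfy L𝟙 = 0 and 𝟙ᵀL = 0, let ℰ ⊆ {(i,j) : i ≠ j} be a set of m directed edges with L_{ij} = 0 for i ≠ j whenever (i,j) ∉ ℰ, let D(L) be the diagonal matrix of the diagonal of L, and let Ē ∈ ℝ^{n×m} have entry Ē_{i,τ} = L_{ij} when τ = (i,j) ∈ ℰ and 0 otherwise. Fix parameters α, ζ, δ, η ∈ ℝ, gradients g_1, …, g_n : ℝ → ℝ, and an arbitrary sequence of success/loss labels for each edge and each time step. Consider the unprojected trajectory (w1^k, w2^k, φ^k) ∈ ℝⁿ × ℝⁿ × ℝ^m: v^k = D(L)(δw1^k + ηw2^k) + Ēφ^k, x^k = w1^k − v^k, u^k = F(x^k), w1^{k+1} = w1^k − αu^k − ζv^k, w2^{k+1} = w1^k + w2^k − v^k, and for each edge τ = (i,j): φ_τ^{k+1} = δw1_j^{k+1} + ηw2_j^{k+1} if τ succeeds at step k, φ_τ^{k+1} = φ_τ^k + ηx_i^k if τ is lost; and the projected trajectory (ŵ1^k, ŵ2^k, φ̂^k) with the same loss labels: v̂^k = D(L)(δŵ1^k + ηŵ2^k) + Ēφ̂^k,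 x̂^k = ŵ1^k − v̂^k, û^k = F(x̂^k), ŵ1^{k+1} = ŵ1^k − αû^k − ζv̂^k, ŵ2^{k+1} = (I − Π)(ŵ1^k + ŵ2^k − v̂^k), and φ̂_τ^{k+1} = δŵ1_j^{k+1} + ηŵ2_j^{k+1} on success, φ̂_τ^{k+1} = φ̂_τ^k + η·e_iᵀ(I − Π)x̂^k on loss. If ŵ1^0 = w1^0, ŵ2^0 = (I − Π)w2^0, and φ̂_τ^0 = φ_τ^0 − (η/n)𝟙ᵀw2^0 for all τ ∈ ℰ, then for all k ≥ 0: ŵ1^k = w1^k, x̂^k = x^k, ŵ2^k = (I − Π)w2^k, and φ̂_τ^k = φ_τ^k − (η/n)𝟙ᵀw2^k for all τ ∈ ℰ. -/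

import Mathlib

open Matrix

/-- The projection Π = (1/n)𝟙𝟙ᵀ onto the consensus subspace. -/
noncomputable def consensusProj (n : ℕ) : Matrix (Fin n) (Fin n) ℝ :=
  Matrix.of fun _ _ => (n : ℝ)⁻¹

/-- The matrix `Ē ∈ ℝ^{n×m}` with `Ē_{i,τ} = L_{ij}` when `τ = (i,j) ∈ ℰ`, else `0`. -/
noncomputable def edgeMatrix {n m : ℕ} (L : Matrix (Fin n) (Fin n) ℝ)
    (ε : Fin m → Fin n × Fin n) : Matrix (Fin n) (Fin m) ℝ :=
  Matrix.of fun i τ => if (ε τ).1 = i then L (ε τ).1 (ε τ).2 else 0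

/-- `D(L)`: the diagonal matrix of the diagonal of `L`. -/
noncomputable def diagOf {n : ℕ} (L : Matrix (Fin n) (Fin n) ℝ) :
    Matrix (Fin n) (Fin n) ℝ :=
  Matrix.diagonal fun i => L i i

lemma proj_mulVec_apply {n : ℕ} (y : Fin n → ℝ) (i : Fin n) :
    ((1 - consensusProj n) *ᵥ y) i = y i - (n : ℝ)⁻¹ * ∑ j, y j := by
  simp only [Matrix.sub_mulVec, Pi.sub_apply, Matrix.one_mulVec]
  congr 1
  simp [consensusProj, Matrix.mulVec, dotProduct, Finset.mul_sum]

lemma edge_sum {n m : ℕ} (L : Matrix (Fin n) (Fin n) ℝ)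
    (hL1 : L *ᵥ (fun _ => (1 : ℝ)) = 0)
    (ε : Fin m → Fin n × Fin n) (hεinj : Function.Injective ε)
    (hεne : ∀ τ, (ε τ).1 ≠ (ε τ).2)
    (hLsparse : ∀ i j : Fin n, i ≠ j → (∀ τ, ε τ ≠ (i, j)) → L i j = 0)
    (i : Fin n) : ∑ τ, edgeMatrix L ε i τ = - L i i := by
  have hrow : ∑ j, L i j = 0 := by
    have := congrFun hL1 i
    simpa [Matrix.mulVec, dotProduct] using this
  have step1 : ∀ τ, edgeMatrix L ε i τ = ∑ j, if ε τ = (i, j) then L i j else 0 := by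
    intro τ
    by_cases h : (ε τ).1 = i
    · rw [Finset.sum_eq_single (ε τ).2]
      · simp [edgeMatrix, h, Prod.ext_iff]
      · intro j _ hj
        simp [Prod.ext_iff]
        intro _ h2; exact absurd h2.symm hj
      · simp
    · simp only [edgeMatrix, Matrix.of_apply, if_neg h]
      symm
      apply Finset.sum_eq_zero
      intro j _
      rw [if_neg]
      intro hc
      exact h (by rw [hc])
  rw [Finset.sum_congr rfl fun τ _ => step1 τ, Finset.sum_comm]
  have step2 : ∀ j : Fin n, (∑ τ, if ε τ = (i, j) then L i j else 0) =
      if j = i then 0 else L i j := by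
    intro j
    by_cases hj : j = i
    · subst hj
      rw [if_pos rfl]
      apply Finset.sum_eq_zero
      intro τ _
      rw [if_neg]
      intro hc
      exact hεne τ (by rw [hc])
    · rw [if_neg hj]
      by_cases hex : ∃ τ0, ε τ0 = (i, j)
      · obtain ⟨τ0, h0⟩ := hex
        rw [Finset.sum_eq_single τ0]
        · rw [if_pos h0]
        · intro τ _ hτ
          rw [if_neg]
          intro hc
          exact hτ (hεinj (hc.trans h0.symm))
        · simp
      · push_neg at hex
        rw [Finset.sum_eq_zero (fun τ _ => if_neg (hex τ)),
          hLsparse i j (fun h => hj h.symm) hex]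
  rw [Finset.sum_congr rfl fun j _ => step2 j]
  have : (∑ j : Fin n, if j = i then (0:ℝ) else L i j)
      = ∑ j, (L i j - if j = i then L i j else 0) := by
    apply Finset.sum_congr rfl
    intro j _
    by_cases hj : j = i <;> simp [hj]
  rw [this, Finset.sum_sub_distrib, hrow, Finset.sum_ite_eq' Finset.univ i (L i)]
  simp

/-- Theorem 4: the projected edgewise packet-loss trajectory has the
same `w1` and `x` trajectories as the unprojected one, with `ŵ2^k = (I−Π)w2^k` and
`φ̂_τ^k = φ_τ^k − (η/n)𝟙ᵀw2^k`, provided the initial conditions are matched in this way. -/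
theorem edgewise_projection_preserves_trajectories {n m : ℕ} (hn : 1 ≤ n)
    (L : Matrix (Fin n) (Fin n) ℝ)
    (hL1 : L *ᵥ (fun _ => (1 : ℝ)) = 0) (hL2 : (fun _ => (1 : ℝ)) ᵥ* L = 0)
    (ε : Fin m → Fin n × Fin n) (hεinj : Function.Injective ε)
    (hεne : ∀ τ, (ε τ).1 ≠ (ε τ).2)
    (hLsparse : ∀ i j : Fin n, i ≠ j → (∀ τ, ε τ ≠ (i, j)) → L i j = 0)
    (α ζ δ η : ℝ) (g : Fin n → ℝ → ℝ)
    (succ : ℕ → Fin m → Bool)  -- success/loss labels, `true` = success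
    -- unprojected trajectory
    (w1 w2 v x u : ℕ → Fin n → ℝ) (φ : ℕ → Fin m → ℝ)
    (hv : ∀ k, v k = diagOf L *ᵥ (δ • w1 k + η • w2 k) + edgeMatrix L ε *ᵥ φ k)
    (hx : ∀ k, x k = w1 k - v k)
    (hu : ∀ k, u k = fun i => g i (x k i))
    (hw1 : ∀ k, w1 (k + 1) = w1 k - α • u k - ζ • v k)
    (hw2 : ∀ k, w2 (k + 1) = w1 k + w2 k - v k)
    (hφ : ∀ k τ, φ (k + 1) τ =
      if succ k τ then δ * w1 (k + 1) (ε τ).2 + η * w2 (k + 1) (ε τ).2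
      else φ k τ + η * x k (ε τ).1)
    -- projected trajectory, same loss labels
    (w1h w2h vh xh uh : ℕ → Fin n → ℝ) (φh : ℕ → Fin m → ℝ)
    (hvh : ∀ k, vh k = diagOf L *ᵥ (δ • w1h k + η • w2h k) + edgeMatrix L ε *ᵥ φh k)
    (hxh : ∀ k, xh k = w1h k - vh k)
    (huh : ∀ k, uh k = fun i => g i (xh k i))
    (hw1h : ∀ k, w1h (k + 1) = w1h k - α • uh k - ζ • vh k)
    (hw2h : ∀ k, w2h (k + 1) = (1 - consensusProj n) *ᵥ (w1h k + w2h k - vh k))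
    (hφh : ∀ k τ, φh (k + 1) τ =
      if succ k τ then δ * w1h (k + 1) (ε τ).2 + η * w2h (k + 1) (ε τ).2
      else φh k τ + η * ((1 - consensusProj n) *ᵥ xh k) (ε τ).1)
    -- matched initial conditions
    (hinit1 : w1h 0 = w1 0)
    (hinit2 : w2h 0 = (1 - consensusProj n) *ᵥ w2 0)
    (hinit3 : ∀ τ, φh 0 τ = φ 0 τ - (η / n) * ∑ i, w2 0 i) :
    ∀ k : ℕ,
      w1h k = w1 k ∧
      xh k = x k ∧
      w2h k = (1 - consensusProj n) *ᵥ w2 k ∧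
      ∀ τ, φh k τ = φ k τ - (η / n) * ∑ i, w2 k i := by
  have hnR : (0 : ℝ) < n := by exact_mod_cast hn
  have hES : ∀ i, ∑ τ, edgeMatrix L ε i τ = - L i i :=
    edge_sum L hL1 ε hεinj hεne hLsparse
  have hdiag : ∀ (y : Fin n → ℝ) (i : Fin n), (diagOf L *ᵥ y) i = L i i * y i := by
    intro y i
    simp [diagOf, Matrix.mulVec_diagonal]
  have hvkey : ∀ k, w1h k = w1 k → w2h k = (1 - consensusProj n) *ᵥ w2 k →
      (∀ τ, φh k τ = φ k τ - (η / n) * ∑ i, w2 k i) → vh k = v k := by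
    intro k hA hC hD
    funext i
    rw [hvh, hv]
    simp only [Pi.add_apply]
    have h1 : (diagOf L *ᵥ (δ • w1h k + η • w2h k)) i
        = (diagOf L *ᵥ (δ • w1 k + η • w2 k)) i
          - η * ((n : ℝ)⁻¹ * ∑ j, w2 k j) * L i i := by
      rw [hdiag, hdiag, hA, hC]
      simp only [Pi.add_apply, Pi.smul_apply, smul_eq_mul, proj_mulVec_apply]
      ring
    have h2 : (edgeMatrix L ε *ᵥ φh k) i
        = (edgeMatrix L ε *ᵥ φ k) i + η * ((n : ℝ)⁻¹ * ∑ j, w2 k j) * L i i := by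
      simp only [Matrix.mulVec, dotProduct]
      rw [Finset.sum_congr rfl (fun τ _ => by rw [hD τ])]
      have hterm : ∀ τ : Fin m, edgeMatrix L ε i τ * (φ k τ - (η / n) * ∑ j, w2 k j)
          = edgeMatrix L ε i τ * φ k τ
            - (η / n) * (∑ j, w2 k j) * edgeMatrix L ε i τ := fun τ => by ring
      rw [Finset.sum_congr rfl fun τ _ => hterm τ, Finset.sum_sub_distrib,
        ← Finset.mul_sum, hES i]
      ring
    rw [h1, h2]
    ring
  have hsum0 : ∀ y : Fin n → ℝ, ∑ j, ((1 - consensusProj n) *ᵥ y) j = 0 := by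
    intro y
    simp only [proj_mulVec_apply, Finset.sum_sub_distrib, Finset.sum_const,
      Finset.card_univ, Fintype.card_fin, nsmul_eq_mul]
    field_simp
    simp
  intro k
  induction k with
  | zero =>
    exact ⟨hinit1, by rw [hxh, hx, hinit1, hvkey 0 hinit1 hinit2 hinit3],
      hinit2, hinit3⟩
  | succ k ih =>
    obtain ⟨hA, hB, hC, hD⟩ := ih
    have hvv := hvkey k hA hC hD
    have hxx : xh k = x k := by rw [hxh, hx, hA, hvv]
    have huu : uh k = u k := by rw [huh, hu, hxx]
    have hA' : w1h (k + 1) = w1 (k + 1) := by rw [hw1h, hw1, hA, hvv, huu]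
    have hS : ∑ i, w2 (k + 1) i = ∑ i, w2 k i + ∑ i, x k i := by
      rw [hw2 k, hx k]
      simp only [Pi.add_apply, Pi.sub_apply, Finset.sum_sub_distrib,
        Finset.sum_add_distrib]
      ring
    have hC' : w2h (k + 1) = (1 - consensusProj n) *ᵥ w2 (k + 1) := by
      rw [hw2h, hA, hvv, hC, hw2]
      funext i
      have hz := hsum0 (w2 k)
      simp only [proj_mulVec_apply, Pi.add_apply, Pi.sub_apply,
        Finset.sum_add_distrib, Finset.sum_sub_distrib, hz,
        Finset.sum_const, Finset.card_univ, Fintype.card_fin, nsmul_eq_mul]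
      have hn0 : (n : ℝ) ≠ 0 := hnR.ne'
      field_simp
      ring
    have hD' : ∀ τ, φh (k + 1) τ = φ (k + 1) τ - (η / n) * ∑ i, w2 (k + 1) i := by
      intro τ
      rw [hφh, hφ]
      by_cases hs : succ k τ
      · rw [if_pos hs, if_pos hs, hA', hC', proj_mulVec_apply]
        field_simp
        ring
      · rw [if_neg hs, if_neg hs, hD τ, hxx, proj_mulVec_apply, hS]
        field_simp
        ring
    exact ⟨hA', by rw [hxh, hx, hA', hvkey (k + 1) hA' hC' hD'], hC', hD'⟩
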